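/- For positive integers n and k, the number of submultisets of {0,1,...,n-1} of size k that sum to 0 modulo n equals (1/n) * sum over common divisors d of k and n of binomial((n+k)/d - 1, k/d) * φ(d). -/

import Mathlib

open Finset Filter Topology

noncomputable section

/-- number of size-`k` submultisets of `{0,…,n-1}` whose sum is ≡ 0 mod `n` -/
def symCount (n k : ℕ) : ℕ :=
  Nat.card {s : Sym (Fin n) k // ((s : Multiset (Fin n)).map Fin.val).sum % n = 0}

/-- `T n`: number of size-`n` submultisets of `{0,…,n-1}` summing to `0` mod `n`
(= number of rooted unlabelled cyclically distinct plane trees with `n` edges). -/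
def planeTreeT (n : ℕ) : ℕ := symCount n n

/-- Walkup's formula expression `(1/n) ∑_{d ∣ n} C(2d-1, d) φ(n/d)` (exact division). -/
def walkupT (n : ℕ) : ℕ :=
  (∑ d ∈ n.divisors, Nat.choose (2 * d - 1) d * Nat.totient (n / d)) / n

/-- number of up-steps strictly before position `i` in a monotone lattice path
encoded by `f : Fin m → Bool` (`true` = up-step, `false` = right-step). -/
def upsBefore {m : ℕ} (f : Fin m → Bool) (i : Fin m) : ℕ :=
  Nat.card {j : Fin m // j < i ∧ f j = true}

/-- area below/right of a monotone lattice path: sum over right-steps of the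
number of up-steps before them. -/
def pathArea {m : ℕ} (f : Fin m → Bool) : ℕ :=
  ∑ i : Fin m, if f i = false then upsBefore f i else 0

/-- number of up-steps of a monotone lattice path. -/
def upCount {m : ℕ} (f : Fin m → Bool) : ℕ := Nat.card {i : Fin m // f i = true}

/-- the `m`-th increment (`±1`) of a walk of length `2n` encoded by
`ε : Fin (2n) → Bool` (`true` = `+1`); `0` out of range. -/
def stepVal (n : ℕ) (ε : Fin (2 * n) → Bool) (m : ℕ) : ℤ :=
  if h : m < 2 * n then (if ε ⟨m, h⟩ then 1 else -1) else 0

/-- position of the walk after `k` steps. -/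
def wpos (n : ℕ) (ε : Fin (2 * n) → Bool) (k : ℕ) : ℤ :=
  ∑ i ∈ Finset.range k, stepVal n ε i

/-- a walk of length `2n` is a bridge if it returns to `0`. -/
def IsBridge (n : ℕ) (ε : Fin (2 * n) → Bool) : Prop := wpos n ε (2 * n) = 0

/-- partial diamond area `σ_{2k} = (1/2) ∑_{i=1}^k B_{2i}` (the division is exact). -/
def psig (n : ℕ) (ε : Fin (2 * n) → Bool) (k : ℕ) : ℤ :=
  (∑ i ∈ Finset.range k, wpos n ε (2 * (i + 1))) / 2

/-- diamond area `σ(B) = (1/2) ∑_{i=1}^n B_{2i}`. -/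
def dsigma (n : ℕ) (ε : Fin (2 * n) → Bool) : ℤ := psig n ε n

/-- a bridge is graphical if `σ(B) = 0` and `σ_{2k} ≥ 0` for all `1 ≤ k < n`. -/
def IsGraphical (n : ℕ) (ε : Fin (2 * n) → Bool) : Prop :=
  IsBridge n ε ∧ dsigma n ε = 0 ∧ ∀ k, 1 ≤ k → k < n → 0 ≤ psig n ε k

/-- `B_n`: the number of graphical bridges of length `2n`. -/
def graphicalCount (n : ℕ) : ℕ := Nat.card {ε : Fin (2 * n) → Bool // IsGraphical n ε}

namespace VS

lemma geom_inv (u : ℂ) :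
    (1 - PowerSeries.C u * PowerSeries.X) * PowerSeries.mk (fun a => u ^ a) = 1 := by
  ext a
  rw [sub_mul, one_mul, map_sub]
  rcases a with _ | a
  · simp
  · rw [mul_assoc, PowerSeries.coeff_C_mul, PowerSeries.coeff_succ_X_mul,
      PowerSeries.coeff_mk, PowerSeries.coeff_mk, PowerSeries.coeff_one]
    simp [pow_succ]
    ring

/-- formal inverse of `(1 - X^d)^(m+1)` -/
def Rser (d m : ℕ) : PowerSeries ℂ :=
  PowerSeries.mk fun a => if d ∣ a then ((Nat.choose (a / d + m) (a / d) : ℕ) : ℂ) else 0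

lemma Rser_mul_one_sub_zero {d : ℕ} (hd : 0 < d) : Rser d 0 * (1 - PowerSeries.X ^ d) = 1 := by
  ext a
  rw [mul_sub, mul_one, map_sub, PowerSeries.coeff_mul_X_pow', PowerSeries.coeff_one]
  simp only [Rser, PowerSeries.coeff_mk]
  rcases Nat.eq_zero_or_pos a with rfl | ha
  · simp [hd.ne']
  · by_cases h : d ∣ a
    · have hda : d ≤ a := Nat.le_of_dvd ha h
      have h2 : d ∣ a - d := (Nat.dvd_sub h dvd_rfl)
      simp [h, hda, h2, ha.ne']
    · have h2 : ¬ (d ≤ a ∧ d ∣ a - d) := by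
        rintro ⟨h1, h2⟩
        obtain ⟨t, ht⟩ := h2
        exact h ⟨t + 1, by rw [Nat.mul_succ]; omega⟩
      simp only [h, if_false, PowerSeries.coeff_mk]
      rcases le_or_gt d a with hle | hlt
      · have : ¬ d ∣ a - d := fun hh => h (by
          obtain ⟨t, ht⟩ := hh
          exact ⟨t + 1, by rw [Nat.mul_succ]; omega⟩)
        simp [hle, this, ha.ne']
      · simp [Nat.not_le.mpr hlt, ha.ne']

lemma Rser_mul_one_sub_succ {d : ℕ} (hd : 0 < d) (m : ℕ) :
    Rser d (m + 1) * (1 - PowerSeries.X ^ d) = Rser d m := by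
  ext a
  rw [mul_sub, mul_one, map_sub, PowerSeries.coeff_mul_X_pow']
  simp only [Rser, PowerSeries.coeff_mk]
  by_cases h : d ∣ a
  · rcases Nat.eq_zero_or_pos a with rfl | ha
    · simp [hd.ne']
    · have hda : d ≤ a := Nat.le_of_dvd ha h
      have h2 : d ∣ a - d := Nat.dvd_sub h dvd_rfl
      have ht : (a - d) / d = a / d - 1 := by
        obtain ⟨t, rfl⟩ := h
        rcases t with _ | t
        · omega
        · rw [Nat.mul_div_cancel_left _ hd]
          have : d * (t+1) - d = d * t := by ring_nf; omega
          rw [this, Nat.mul_div_cancel_left _ hd]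
          omega
      have hq : 1 ≤ a / d := Nat.one_le_div_iff hd |>.mpr hda
      simp only [h, if_true, hda, if_pos, h2, PowerSeries.coeff_mk, ht]
      -- choose identity
      obtain ⟨s, hs⟩ : ∃ s, a / d = s + 1 := ⟨a / d - 1, by omega⟩
      rw [hs]
      simp only [Nat.add_sub_cancel]
      have : (s + 1 + (m + 1)).choose (s + 1) = (s + (m+1)).choose s + (s + 1 + m).choose (s+1) := by
        have := Nat.choose_succ_succ (s + 1 + m) s
        simpa [Nat.succ_eq_add_one, show s + 1 + m + 1 = s + 1 + (m+1) by ring,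
          show s + (m+1) = s + 1 + m by ring] using this
      rw [this]
      push_cast
      ring
  · have h2 : ∀ (hle : d ≤ a), ¬ d ∣ a - d := by
      intro hle hh
      obtain ⟨t, ht⟩ := hh
      exact h ⟨t + 1, by rw [Nat.mul_succ]; omega⟩
    rcases le_or_gt d a with hle | hlt
    · simp [h, hle, h2 hle]
    · simp [h, Nat.not_le.mpr hlt]

lemma pow_mul_Rser {d : ℕ} (hd : 0 < d) (m : ℕ) :
    Rser d m * (1 - PowerSeries.X ^ d) ^ (m + 1) = 1 := by
  induction m with
  | zero => simpa using Rser_mul_one_sub_zero hd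
  | succ m ih =>
      rw [pow_succ, ← mul_assoc]
      calc Rser d (m+1) * (1 - PowerSeries.X ^ d) ^ (m+1) * (1 - PowerSeries.X ^ d)
          = Rser d (m+1) * (1 - PowerSeries.X ^ d) * (1 - PowerSeries.X ^ d) ^ (m+1) := by ring
        _ = Rser d m * (1 - PowerSeries.X ^ d) ^ (m+1) := by rw [Rser_mul_one_sub_succ hd]
        _ = 1 := ih


lemma nthRootsFinset_eq_image {d : ℕ} (hd : 0 < d) {ω : ℂ} (hω : IsPrimitiveRoot ω d) :
    Polynomial.nthRootsFinset d (1 : ℂ) = (Finset.range d).image (ω ^ ·) := by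
  ext μ
  simp only [Polynomial.mem_nthRootsFinset hd, Finset.mem_image, Finset.mem_range]
  constructor
  · intro h
    haveI : NeZero d := ⟨hd.ne'⟩
    obtain ⟨i, hik, rfl⟩ := hω.eq_pow_of_pow_eq_one h
    exact ⟨i, hik, rfl⟩
  · rintro ⟨i, -, rfl⟩
    rw [← pow_mul, mul_comm, pow_mul, hω.pow_eq_one, one_pow]

lemma prod_period_poly {d : ℕ} (hd : 0 < d) {ω : ℂ} (hω : IsPrimitiveRoot ω d) :
    ∏ r ∈ Finset.range d, (1 - Polynomial.C (ω ^ r) * Polynomial.X) =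
      1 - Polynomial.X ^ d := by
  apply Polynomial.funext
  intro x
  rw [Polynomial.eval_prod]
  simp only [Polynomial.eval_sub, Polynomial.eval_one, Polynomial.eval_mul, Polynomial.eval_C,
    Polynomial.eval_X, Polynomial.eval_pow]
  have h1 : (1 : ℂ) ^ d - x ^ d = ∏ μ ∈ Polynomial.nthRootsFinset d (1 : ℂ), (1 - μ * x) :=
    IsPrimitiveRoot.pow_sub_pow_eq_prod_sub_mul 1 x hd hω
  rw [one_pow, nthRootsFinset_eq_image hd hω, Finset.prod_image (fun i hi j hj hij =>
    hω.pow_inj (Finset.mem_range.mp hi) (Finset.mem_range.mp hj) hij)] at h1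
  exact h1.symm

lemma prod_period_ps {d : ℕ} (hd : 0 < d) {ω : ℂ} (hω : IsPrimitiveRoot ω d) :
    ∏ r ∈ Finset.range d, (1 - PowerSeries.C (ω ^ r) * PowerSeries.X) =
      1 - PowerSeries.X ^ d := by
  have h := congrArg (Polynomial.coeToPowerSeries.ringHom (R := ℂ)) (prod_period_poly hd hω)
  simpa only [map_prod, map_sub, map_one, map_mul, map_pow,
    Polynomial.coeToPowerSeries.ringHom_apply, Polynomial.coe_C, Polynomial.coe_X] using h

lemma prod_all_ps {n d : ℕ} (hd : 0 < d) (hdn : d ∣ n) {ω : ℂ} (hω : IsPrimitiveRoot ω d) :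
    ∏ j ∈ Finset.range n, (1 - PowerSeries.C (ω ^ j) * PowerSeries.X) =
      (1 - PowerSeries.X ^ d) ^ (n / d) := by
  obtain ⟨m, rfl⟩ := hdn
  rw [Nat.mul_div_cancel_left _ hd]
  induction m with
  | zero => simp
  | succ m ih =>
      rw [Nat.mul_succ, Finset.prod_range_add, ih, pow_succ]
      congr 1
      rw [← prod_period_ps hd hω]
      apply Finset.prod_congr rfl
      intro r _
      rw [pow_add, pow_mul, hω.pow_eq_one, one_pow, one_mul]


lemma sum_map_val {n : ℕ} (M : Multiset (Fin n)) :
    (M.map Fin.val).sum = ∑ j : Fin n, M.count j * (j : ℕ) := by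
  classical
  rw [Finset.sum_multiset_map_count,
    Finset.sum_subset (Finset.subset_univ M.toFinset) (fun x _ hx => by
      simp [Multiset.count_eq_zero.mpr (by simpa using hx)])]
  simp [smul_eq_mul]

lemma sum_count_card {n : ℕ} (M : Multiset (Fin n)) :
    ∑ j : Fin n, M.count j = Multiset.card M := by
  classical
  rw [← Multiset.toFinset_sum_count_eq M]
  exact (Finset.sum_subset (Finset.subset_univ _) fun x _ hx => by
    simpa [Multiset.count_eq_zero] using hx).symm


lemma eval_sum {n k d : ℕ} (hn : 0 < n) (hd0 : 0 < d) (hdn : d ∣ n) {ω : ℂ}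
    (hω : IsPrimitiveRoot ω d) :
    ∑ M : Sym (Fin n) k, ω ^ ((M : Multiset (Fin n)).map Fin.val).sum =
      if d ∣ k then ((Nat.choose (n / d + k / d - 1) (k / d) : ℕ) : ℂ) else 0 := by
  classical
  set F : PowerSeries ℂ := ∏ j ∈ Finset.range n, PowerSeries.mk fun a => (ω ^ j) ^ a with hF
  have hunit : (∏ j ∈ Finset.range n, (1 - PowerSeries.C (ω ^ j) * PowerSeries.X)) * F = 1 := by
    rw [hF, ← Finset.prod_mul_distrib,
      Finset.prod_congr rfl (fun j (_ : j ∈ Finset.range n) => geom_inv (ω ^ j)),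
      Finset.prod_const_one]
  have hq : 1 ≤ n / d := (Nat.one_le_div_iff hd0).mpr (Nat.le_of_dvd hn hdn)
  have hF_eq : F = Rser d (n / d - 1) := by
    have h1 : (1 - PowerSeries.X ^ d) ^ (n / d) * F = 1 := by
      rw [← prod_all_ps hd0 hdn hω]; exact hunit
    have h2 : (1 - PowerSeries.X ^ d) ^ (n / d) * Rser d (n / d - 1) = 1 := by
      have h := pow_mul_Rser hd0 (n / d - 1)
      rw [mul_comm] at h
      rwa [show n / d - 1 + 1 = n / d by omega] at h
    calc F = F * ((1 - PowerSeries.X ^ d) ^ (n / d) * Rser d (n / d - 1)) := by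
            rw [h2, mul_one]
      _ = ((1 - PowerSeries.X ^ d) ^ (n / d) * F) * Rser d (n / d - 1) := by ring
      _ = Rser d (n / d - 1) := by rw [h1, one_mul]
  have hcoeff : PowerSeries.coeff k F =
      if d ∣ k then ((Nat.choose (n / d + k / d - 1) (k / d) : ℕ) : ℂ) else 0 := by
    rw [hF_eq]
    unfold Rser
    rw [PowerSeries.coeff_mk]
    by_cases h : d ∣ k
    · have h3 : k / d + (n / d - 1) = n / d + k / d - 1 := by
        generalize k / d = t
        generalize n / d = q at hq ⊢
        omega
      simp [h, h3]
    · simp [h]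
  rw [← hcoeff, hF]
  have hprodfin : (∏ j ∈ Finset.range n, PowerSeries.mk fun a => (ω ^ j) ^ a)
      = ∏ j : Fin n, PowerSeries.mk fun a => (ω ^ (j : ℕ)) ^ a :=
    (Fin.prod_univ_eq_prod_range _ n).symm
  rw [hprodfin, PowerSeries.coeff_prod]
  refine Finset.sum_nbij' (fun M => Multiset.toFinsupp (M : Multiset (Fin n)))
    (fun l => if h : Multiset.card (Finsupp.toMultiset l) = k then Sym.mk (Finsupp.toMultiset l) h
      else Sym.replicate k ⟨0, hn⟩) ?_ ?_ ?_ ?_ ?_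
  · -- hi : maps to finsuppAntidiag
    intro M _
    rw [Finset.mem_finsuppAntidiag]
    refine ⟨?_, Finset.subset_univ _⟩
    change ∑ j : Fin n, Multiset.count j (M : Multiset (Fin n)) = k
    exact (sum_count_card _).trans M.2
  · intro l _; exact Finset.mem_univ _
  · intro M _
    have hc : Multiset.card (Finsupp.toMultiset (Multiset.toFinsupp (M : Multiset (Fin n)))) = k := by
      rw [Multiset.toFinsupp_toMultiset]
      exact M.2
    rw [dif_pos hc]
    exact Subtype.ext (Multiset.toFinsupp_toMultiset _)
  · intro l hl
    have hc : Multiset.card (Finsupp.toMultiset l) = k := by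
      rw [Finset.mem_finsuppAntidiag] at hl
      rw [Finsupp.card_toMultiset]
      rw [Finsupp.sum_fintype _ _ (fun _ => rfl)]
      exact hl.1
    rw [dif_pos hc]
    exact Finsupp.toMultiset_toFinsupp l
  · intro M _
    rw [sum_map_val]
    simp only [PowerSeries.coeff_mk, Multiset.toFinsupp_apply]
    rw [← Finset.prod_pow_eq_pow_sum]
    exact Finset.prod_congr rfl fun j _ => by rw [mul_comm, pow_mul]

end VS

theorem von_sterneck (n k : ℕ) (hn : 0 < n) (hk : 0 < k) :
    n * symCount n k =
      ∑ d ∈ (Nat.gcd k n).divisors,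
        Nat.choose ((n + k) / d - 1) (k / d) * Nat.totient d := by
  classical
  set ζ : ℂ := Complex.exp (2 * Real.pi * Complex.I / n) with hζdef
  have hζ : IsPrimitiveRoot ζ n := Complex.isPrimitiveRoot_exp n hn.ne'
  set s : Sym (Fin n) k → ℕ := fun M => ((M : Multiset (Fin n)).map Fin.val).sum with hs
  have hcount : symCount n k = (Finset.univ.filter fun M : Sym (Fin n) k => s M % n = 0).card := by
    rw [symCount, Nat.card_eq_fintype_card, Fintype.card_subtype]
  -- step 1
  have step1 : ((n * symCount n k : ℕ) : ℂ)
      = ∑ M : Sym (Fin n) k, ∑ c ∈ Finset.range n, (ζ ^ s M) ^ c := by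
    have hinner : ∀ M : Sym (Fin n) k,
        ∑ c ∈ Finset.range n, (ζ ^ s M) ^ c = if s M % n = 0 then (n : ℂ) else 0 := by
      intro M
      by_cases h : s M % n = 0
      · have h1 : ζ ^ s M = 1 := (hζ.pow_eq_one_iff_dvd (s M)).mpr (Nat.dvd_of_mod_eq_zero h)
        simp [h1, h]
      · have hx1 : ζ ^ s M ≠ 1 := fun hx =>
          h (Nat.mod_eq_zero_of_dvd ((hζ.pow_eq_one_iff_dvd (s M)).mp hx))
        have hxn : (ζ ^ s M) ^ n = 1 := by
          rw [← pow_mul, mul_comm, pow_mul, hζ.pow_eq_one, one_pow]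
        rw [geom_sum_eq hx1, hxn, sub_self, zero_div, if_neg h]
    rw [Finset.sum_congr rfl fun M _ => hinner M, Finset.sum_ite, Finset.sum_const_zero,
      add_zero, Finset.sum_const, hcount]
    push_cast
    rw [nsmul_eq_mul, mul_comm]
  -- step 2 : swap and evaluate
  have step2 : (∑ M : Sym (Fin n) k, ∑ c ∈ Finset.range n, (ζ ^ s M) ^ c)
      = ∑ c ∈ Finset.range n,
          (if (n / Nat.gcd n c) ∣ k then
            ((Nat.choose (n / (n / Nat.gcd n c) + k / (n / Nat.gcd n c) - 1)
              (k / (n / Nat.gcd n c)) : ℕ) : ℂ) else 0) := by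
    rw [Finset.sum_comm]
    refine Finset.sum_congr rfl fun c _ => ?_
    have hgpos : 0 < Nat.gcd n c := Nat.gcd_pos_of_pos_left c hn
    have hgdvd : Nat.gcd n c ∣ n := Nat.gcd_dvd_left n c
    have hd0 : 0 < n / Nat.gcd n c := Nat.div_pos (Nat.le_of_dvd hn hgdvd) hgpos
    have hdn : n / Nat.gcd n c ∣ n := ⟨Nat.gcd n c, (Nat.div_mul_cancel hgdvd).symm⟩
    have hne : n = Nat.gcd n c * (n / Nat.gcd n c) := (Nat.mul_div_cancel' hgdvd).symm
    have h1 : IsPrimitiveRoot (ζ ^ Nat.gcd n c) (n / Nat.gcd n c) := hζ.pow hn hne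
    have hcop : (c / Nat.gcd n c).Coprime (n / Nat.gcd n c) :=
      (Nat.coprime_div_gcd_div_gcd hgpos).symm
    have h2 : IsPrimitiveRoot ((ζ ^ Nat.gcd n c) ^ (c / Nat.gcd n c)) (n / Nat.gcd n c) :=
      h1.pow_of_coprime _ hcop
    have h3 : (ζ ^ Nat.gcd n c) ^ (c / Nat.gcd n c) = ζ ^ c := by
      rw [← pow_mul, Nat.mul_div_cancel' (Nat.gcd_dvd_right n c)]
    rw [h3] at h2
    have h4 : ∀ M : Sym (Fin n) k, (ζ ^ s M) ^ c = (ζ ^ c) ^ s M := by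
      intro M; rw [← pow_mul, mul_comm, pow_mul]
    rw [Finset.sum_congr rfl fun M _ => h4 M]
    exact VS.eval_sum hn hd0 hdn h2
  -- step 3 : grouping by gcd
  set g : ℕ → ℂ := fun d => if d ∣ k then
      ((Nat.choose (n / d + k / d - 1) (k / d) : ℕ) : ℂ) else 0 with hg
  have step3 : (∑ c ∈ Finset.range n, g (n / Nat.gcd n c))
      = ∑ d ∈ n.divisors, (Nat.totient d : ℂ) * g d := by
    have hmaps : ∀ c ∈ Finset.range n, Nat.gcd n c ∈ n.divisors :=
      fun c _ => Nat.mem_divisors.mpr ⟨Nat.gcd_dvd_left n c, hn.ne'⟩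
    rw [← Finset.sum_fiberwise_of_maps_to hmaps]
    have heach : ∀ e ∈ n.divisors,
        (∑ c ∈ Finset.range n with Nat.gcd n c = e, g (n / Nat.gcd n c))
          = (Nat.totient (n / e) : ℂ) * g (n / e) := by
      intro e he
      rw [Finset.sum_congr rfl fun c hc => by
        rw [(Finset.mem_filter.mp hc).2]]
      rw [Finset.sum_const, ← Nat.totient_div_of_dvd (Nat.mem_divisors.mp he).1,
        nsmul_eq_mul]
    rw [Finset.sum_congr rfl heach, ← Nat.sum_div_divisors n (fun d => (Nat.totient d : ℂ) * g d)]
  -- step 4 : restrict to divisors of gcd k n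
  have hset : n.divisors.filter (· ∣ k) = (Nat.gcd k n).divisors := by
    ext d
    simp only [Finset.mem_filter, Nat.mem_divisors]
    constructor
    · rintro ⟨⟨h1, h2⟩, h3⟩
      exact ⟨Nat.dvd_gcd h3 h1, Nat.gcd_ne_zero_right h2⟩
    · rintro ⟨h1, h2⟩
      exact ⟨⟨h1.trans (Nat.gcd_dvd_right k n), hn.ne'⟩, h1.trans (Nat.gcd_dvd_left k n)⟩
  have step4 : (∑ d ∈ n.divisors, (Nat.totient d : ℂ) * g d)
      = ((∑ d ∈ (Nat.gcd k n).divisors,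
          Nat.choose ((n + k) / d - 1) (k / d) * Nat.totient d : ℕ) : ℂ) := by
    rw [← hset]
    rw [Finset.sum_filter]
    rw [Finset.sum_congr rfl (fun d hd => ?_)]
    · push_cast
      ring_nf
      rfl
    · rcases Nat.mem_divisors.mp hd with ⟨hdn', hn0⟩
      by_cases h : d ∣ k
      · have hdiv : (n + k) / d = n / d + k / d := Nat.add_div_of_dvd_right hdn'
        simp only [hg, h, if_true, hdiv]
        push_cast
        ring
      · simp [hg, h]
  calc (n * symCount n k : ℕ) = _ := by
        exact_mod_cast step1.trans (step2.trans (step3.trans step4))
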